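/- For every real a > 1, every integer m ≥ 1 and every x ≥ 0, the third central moment satisfies Λ³_m(x) = −(−1 + 4mx − 6m²x² + 4m³x³)/(4m³) + x·(7 − 12mx + 6m²x²)·(log a)/(2·(a^{1/m} − 1)·m³) − 3x²·(−3 + 2mx)·(log a)²/(2·(a^{1/m} − 1)²·m³) + x³·(log a)³/((a^{1/m} − 1)³·m³). -/
import Mathlib


open Real MeasureTheory Filter

/-- The modified Szász–Mirakjan–Kantorovich operator of Mishra and Yadav. -/
noncomputable def szaszKant (a : ℝ) (m : ℕ) (f : ℝ → ℝ) (x : ℝ) : ℝ :=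
  (m : ℝ) * ∑' k : ℕ,
    Real.exp (-(x * Real.log a / (a ^ ((1 : ℝ) / (m : ℝ)) - 1))) *
      (x * Real.log a / (a ^ ((1 : ℝ) / (m : ℝ)) - 1)) ^ k / (Nat.factorial k : ℝ) *
      ∫ t in ((k : ℝ) / (m : ℝ))..(((k : ℝ) + 1) / (m : ℝ)), f t

/-- The `n`-th central moment of the operator. -/
noncomputable def szaszKantCM (a : ℝ) (m : ℕ) (n : ℕ) (x : ℝ) : ℝ :=
  szaszKant a m (fun t => (t - x) ^ n) x


lemma sum_exp (t : ℝ) : ∑' k : ℕ, t ^ k / (Nat.factorial k : ℝ) = Real.exp t := by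
  rw [Real.exp_eq_exp_ℝ, NormedSpace.exp_eq_tsum_div]

lemma shift1 (t : ℝ) (k : ℕ) :
    ((k+1 : ℕ) : ℝ) * t ^ (k+1) / (Nat.factorial (k+1) : ℝ) = t * (t ^ k / (Nat.factorial k : ℝ)) := by
  have h : (Nat.factorial k : ℝ) ≠ 0 := Nat.cast_ne_zero.mpr (Nat.factorial_ne_zero k)
  have h2 : ((k:ℝ)+1) ≠ 0 := by positivity
  rw [Nat.factorial_succ]
  push_cast
  field_simp
  ring

lemma summable1 (t : ℝ) : Summable (fun k : ℕ => (k : ℝ) * t ^ k / (Nat.factorial k : ℝ)) := by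
  rw [← summable_nat_add_iff 1]
  have : (fun k : ℕ => ((k+1 : ℕ) : ℝ) * t ^ (k+1) / (Nat.factorial (k+1) : ℝ))
      = fun k : ℕ => t * (t ^ k / (Nat.factorial k : ℝ)) := funext (shift1 t)
  rw [this]
  exact (Real.summable_pow_div_factorial t).mul_left t

lemma sum1 (t : ℝ) : ∑' k : ℕ, (k : ℝ) * t ^ k / (Nat.factorial k : ℝ) = t * Real.exp t := by
  rw [Summable.tsum_eq_zero_add (summable1 t)]
  simp only [shift1 t]
  rw [tsum_mul_left, sum_exp]
  simp

lemma shift2 (t : ℝ) (k : ℕ) :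
    ((k+1 : ℕ) : ℝ)^2 * t ^ (k+1) / (Nat.factorial (k+1) : ℝ)
      = t * ((k : ℝ) * t ^ k / (Nat.factorial k : ℝ)) + t * (t ^ k / (Nat.factorial k : ℝ)) := by
  have h : (Nat.factorial k : ℝ) ≠ 0 := Nat.cast_ne_zero.mpr (Nat.factorial_ne_zero k)
  have h2 : ((k:ℝ)+1) ≠ 0 := by positivity
  rw [Nat.factorial_succ]
  push_cast
  field_simp
  ring

lemma summable2 (t : ℝ) : Summable (fun k : ℕ => (k : ℝ)^2 * t ^ k / (Nat.factorial k : ℝ)) := by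
  rw [← summable_nat_add_iff 1]
  have : (fun k : ℕ => ((k+1 : ℕ) : ℝ)^2 * t ^ (k+1) / (Nat.factorial (k+1) : ℝ))
      = fun k : ℕ => t * ((k : ℝ) * t ^ k / (Nat.factorial k : ℝ)) + t * (t ^ k / (Nat.factorial k : ℝ)) :=
    funext (shift2 t)
  rw [this]
  exact ((summable1 t).mul_left t).add ((Real.summable_pow_div_factorial t).mul_left t)

lemma sum2 (t : ℝ) : ∑' k : ℕ, (k : ℝ)^2 * t ^ k / (Nat.factorial k : ℝ)
    = (t^2 + t) * Real.exp t := by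
  rw [Summable.tsum_eq_zero_add (summable2 t)]
  simp only [shift2 t]
  rw [Summable.tsum_add (((summable1 t).mul_left t)) ((Real.summable_pow_div_factorial t).mul_left t),
    tsum_mul_left, tsum_mul_left, sum1, sum_exp]
  simp
  ring

lemma shift3 (t : ℝ) (k : ℕ) :
    ((k+1 : ℕ) : ℝ)^3 * t ^ (k+1) / (Nat.factorial (k+1) : ℝ)
      = t * ((k : ℝ)^2 * t ^ k / (Nat.factorial k : ℝ))
        + (2*t) * ((k : ℝ) * t ^ k / (Nat.factorial k : ℝ)) + t * (t ^ k / (Nat.factorial k : ℝ)) := by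
  have h : (Nat.factorial k : ℝ) ≠ 0 := Nat.cast_ne_zero.mpr (Nat.factorial_ne_zero k)
  have h2 : ((k:ℝ)+1) ≠ 0 := by positivity
  rw [Nat.factorial_succ]
  push_cast
  field_simp
  ring

lemma summable3 (t : ℝ) : Summable (fun k : ℕ => (k : ℝ)^3 * t ^ k / (Nat.factorial k : ℝ)) := by
  rw [← summable_nat_add_iff 1]
  have : (fun k : ℕ => ((k+1 : ℕ) : ℝ)^3 * t ^ (k+1) / (Nat.factorial (k+1) : ℝ))
      = fun k : ℕ => t * ((k : ℝ)^2 * t ^ k / (Nat.factorial k : ℝ))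
        + (2*t) * ((k : ℝ) * t ^ k / (Nat.factorial k : ℝ)) + t * (t ^ k / (Nat.factorial k : ℝ)) :=
    funext (shift3 t)
  rw [this]
  exact (((summable2 t).mul_left t).add ((summable1 t).mul_left (2*t))).add
    ((Real.summable_pow_div_factorial t).mul_left t)

lemma sum3 (t : ℝ) : ∑' k : ℕ, (k : ℝ)^3 * t ^ k / (Nat.factorial k : ℝ)
    = (t^3 + 3*t^2 + t) * Real.exp t := by
  rw [Summable.tsum_eq_zero_add (summable3 t)]
  simp only [shift3 t]
  rw [Summable.tsum_add ((((summable2 t).mul_left t)).add ((summable1 t).mul_left (2*t)))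
      ((Real.summable_pow_div_factorial t).mul_left t),
    Summable.tsum_add (((summable2 t).mul_left t)) ((summable1 t).mul_left (2*t)),
    tsum_mul_left, tsum_mul_left, tsum_mul_left, sum1, sum2, sum_exp]
  simp
  ring

theorem szaszKantCM_three (a : ℝ) (ha : 1 < a) (m : ℕ) (hm : 1 ≤ m)
    (x : ℝ) (hx : 0 ≤ x) :
    szaszKantCM a m 3 x =
      -((-1 + 4 * (m : ℝ) * x - 6 * (m : ℝ) ^ 2 * x ^ 2 + 4 * (m : ℝ) ^ 3 * x ^ 3) /
          (4 * (m : ℝ) ^ 3)) +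
        x * (7 - 12 * (m : ℝ) * x + 6 * (m : ℝ) ^ 2 * x ^ 2) * Real.log a /
          (2 * (a ^ ((1 : ℝ) / (m : ℝ)) - 1) * (m : ℝ) ^ 3) -
        3 * x ^ 2 * (-3 + 2 * (m : ℝ) * x) * Real.log a ^ 2 /
          (2 * (a ^ ((1 : ℝ) / (m : ℝ)) - 1) ^ 2 * (m : ℝ) ^ 3) +
        x ^ 3 * Real.log a ^ 3 / ((a ^ ((1 : ℝ) / (m : ℝ)) - 1) ^ 3 * (m : ℝ) ^ 3) := by
  have hm0 : (0:ℝ) < (m:ℝ) := by exact_mod_cast Nat.lt_of_lt_of_le Nat.zero_lt_one hm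
  have hy : 0 < a ^ ((1:ℝ)/(m:ℝ)) - 1 := by
    have h1 : 1 < a ^ ((1:ℝ)/(m:ℝ)) := by
      rw [Real.one_lt_rpow_iff_of_pos (by linarith : (0:ℝ) < a)]
      exact Or.inl ⟨ha, by positivity⟩
    linarith
  unfold szaszKantCM szaszKant
  set y := a ^ ((1:ℝ)/(m:ℝ)) - 1 with hydef
  set t := x * Real.log a / y with htdef
  set c0 : ℝ := (-4*((m:ℝ)*x)^3 + 6*((m:ℝ)*x)^2 - 4*((m:ℝ)*x) + 1)/(4*(m:ℝ)^4) with hc0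
  set c1 : ℝ := (12*((m:ℝ)*x)^2 - 12*((m:ℝ)*x) + 4)/(4*(m:ℝ)^4) with hc1
  set c2 : ℝ := (6 - 12*((m:ℝ)*x))/(4*(m:ℝ)^4) with hc2
  set c3 : ℝ := 1/((m:ℝ)^4) with hc3
  have hre : ∀ k : ℕ,
      Real.exp (-t) * t ^ k / (Nat.factorial k : ℝ) *
        (∫ s in ((k : ℝ) / (m : ℝ))..(((k : ℝ) + 1) / (m : ℝ)), (s - x) ^ 3)
      = Real.exp (-t) * (c0 * (t ^ k / (Nat.factorial k : ℝ))
          + c1 * ((k:ℝ) * t ^ k / (Nat.factorial k : ℝ))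
          + c2 * ((k:ℝ)^2 * t ^ k / (Nat.factorial k : ℝ))
          + c3 * ((k:ℝ)^3 * t ^ k / (Nat.factorial k : ℝ))) := by
    intro k
    have hint : (∫ s in ((k : ℝ) / (m : ℝ))..(((k : ℝ) + 1) / (m : ℝ)), (s - x) ^ 3)
        = ((((k:ℝ)+1)/(m:ℝ) - x)^4 - ((k:ℝ)/(m:ℝ) - x)^4)/4 := by
      rw [intervalIntegral.integral_comp_sub_right (fun u => u ^ 3) x, integral_pow]
      norm_num
    rw [hint, hc0, hc1, hc2, hc3]
    have hf : (Nat.factorial k : ℝ) ≠ 0 := Nat.cast_ne_zero.mpr (Nat.factorial_ne_zero k)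
    field_simp
    ring
  rw [tsum_congr hre, tsum_mul_left,
    Summable.tsum_add (((((Real.summable_pow_div_factorial t).mul_left c0).add
        ((summable1 t).mul_left c1)).add ((summable2 t).mul_left c2)))
      ((summable3 t).mul_left c3),
    Summable.tsum_add ((((Real.summable_pow_div_factorial t).mul_left c0).add
        ((summable1 t).mul_left c1))) ((summable2 t).mul_left c2),
    Summable.tsum_add (((Real.summable_pow_div_factorial t).mul_left c0))
      ((summable1 t).mul_left c1),
    tsum_mul_left, tsum_mul_left, tsum_mul_left, tsum_mul_left,
    sum_exp, sum1, sum2, sum3]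
  have hcollapse : Real.exp (-t) * (c0 * Real.exp t + c1 * (t * Real.exp t)
      + c2 * ((t^2 + t) * Real.exp t) + c3 * ((t^3 + 3*t^2 + t) * Real.exp t))
      = c0 + c1 * t + c2 * (t^2 + t) + c3 * (t^3 + 3*t^2 + t) := by
    have h1 : Real.exp (-t) * Real.exp t = 1 := by
      rw [← Real.exp_add]; simp
    calc Real.exp (-t) * (c0 * Real.exp t + c1 * (t * Real.exp t)
        + c2 * ((t^2 + t) * Real.exp t) + c3 * ((t^3 + 3*t^2 + t) * Real.exp t))
        = (Real.exp (-t) * Real.exp t) * (c0 + c1 * t + c2 * (t^2 + t)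
            + c3 * (t^3 + 3*t^2 + t)) := by ring
      _ = _ := by rw [h1]; ring
  rw [hcollapse, hc0, hc1, hc2, hc3, htdef]
  field_simp
  ring
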